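/- Let P be a logic program over a set of atoms 𝒜 and let φ be a CNF formula over 𝒜 ∪ ℬ (with ℬ disjoint from 𝒜) such that SM(P) = {M ∩ 𝒜 | M is a model of φ}. Then for every prefix 𝒬 = Q₀X₀…QₙXₙ all of whose sets Xᵢ are subsets of 𝒜, the quantified logic program 𝒬P is satisfiable if and only if the quantified Boolean formula 𝒬φ is satisfiable. -/

import Mathlib

namespace ASP

universe u v

variable {α : Type u} {β : Type v}

/-- A literal over atoms `α`: an atom or its default negation. -/
inductive Lit (α : Type u) where
  | pos (a : α)
  | neg (a : α)

/-- Satisfaction of a literal by a set of atoms. -/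
def Lit.sat (X : Set α) : Lit α → Prop
  | .pos a => a ∈ X
  | .neg a => a ∉ X

/-- The atom occurring in a literal. -/
def Lit.atomOf : Lit α → α
  | .pos a => a
  | .neg a => a

/-- The head of a rule: an atom (normal rule), a choice `{p}`, or `⊥` (constraint). -/
inductive Head (α : Type u) where
  | atom (a : α)
  | choice (a : α)
  | bot

def Head.atoms : Head α → Set α
  | .atom a => {a}
  | .choice a => {a}
  | .bot => ∅

/-- A rule `H ← B` with head `H` and body `B`, a set of literals. -/
structure Rule (α : Type u) where
  head : Head α
  body : Set (Lit α)

/-- A logic program is a set of rules. -/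
abbrev Program (α : Type u) := Set (Rule α)

def ruleAtoms (r : Rule α) : Set α := r.head.atoms ∪ Lit.atomOf '' r.body

def progAtoms (P : Program α) : Set α := ⋃ r ∈ P, ruleAtoms r

/-- `M` satisfies the `X`-reduct of a literal, i.e. the literal where any literal
not satisfied by `X` has been replaced by `⊥`. -/
def Lit.redSat (X M : Set α) (l : Lit α) : Prop := l.sat X ∧ l.sat M

/-- `M` satisfies the `X`-reduct of a head (`{p}` is read as `p ∨ ¬ p`). -/
def Head.redSat (X M : Set α) : Head α → Prop
  | .atom a => a ∈ X ∧ a ∈ M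
  | .choice a => (a ∈ X ∧ a ∈ M) ∨ (a ∉ X ∧ a ∉ M)
  | .bot => False

/-- `M` is a model of the formula obtained from `P` by replacing every literal
not satisfied by `X` with `⊥`. -/
def redModel (P : Program α) (X M : Set α) : Prop :=
  ∀ r ∈ P, (∀ l ∈ r.body, l.redSat X M) → r.head.redSat X M

/-- `X` is a stable model of `P`: a subset-minimal model of the `X`-reduct of `P`. -/
def StableModel (P : Program α) (X : Set α) : Prop :=
  redModel P X X ∧ ∀ M, M ⊆ X → redModel P X M → M = X

/-- The set of stable models of a program. -/
def SM (P : Program α) : Set (Set α) := {X | StableModel P X}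

/-- A program is satisfiable if it has a stable model. -/
def Satisfiable (P : Program α) : Prop := ∃ X, StableModel P X

def Head.clSat (M : Set α) : Head α → Prop
  | .atom a => a ∈ M
  | .choice _ => True
  | .bot => False

/-- `M` is a (classical) model of `P`, reading rules as implications. -/
def IsModel (P : Program α) (M : Set α) : Prop :=
  ∀ r ∈ P, (∀ l ∈ r.body, l.sat M) → r.head.clSat M

/-- `fixcons X Y = {⊥ ← not x | x ∈ X} ∪ {⊥ ← x | x ∈ Y \ X}`. -/
def fixcons (X Y : Set α) : Program α :=
  {r | (∃ x ∈ X, r = ⟨Head.bot, {Lit.neg x}⟩) ∨ (∃ x ∈ Y \ X, r = ⟨Head.bot, {Lit.pos x}⟩)}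

/-- A set of atoms identified with the corresponding facts. -/
def factsOf (X : Set α) : Program α := {r | ∃ x ∈ X, r = ⟨Head.atom x, ∅⟩}

/-- Quantifiers. -/
inductive Quant where
  | ex
  | fa

/-- Satisfiability of a quantified logic program, given by its prefix (a list of
quantified sets of atoms) and its program. -/
def QLPSat : List (Quant × Set α) → Program α → Prop
  | [], P => Satisfiable P
  | (Quant.ex, X) :: Q, P => ∃ Y, Y ⊆ X ∧ QLPSat Q (P ∪ fixcons Y X)
  | (Quant.fa, X) :: Q, P => ∀ Y, Y ⊆ X → QLPSat Q (P ∪ fixcons Y X)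

/-- `r` has head atom `p` (either `p` or `{p}`). -/
def headAtomIs (r : Rule α) (p : α) : Prop :=
  r.head = Head.atom p ∨ r.head = Head.choice p

def posEdge (P : Program α) (p q : α) : Prop :=
  ∃ r ∈ P, headAtomIs r q ∧ Lit.pos p ∈ r.body

def negEdge (P : Program α) (p q : α) : Prop :=
  ∃ r ∈ P, headAtomIs r q ∧ Lit.neg p ∈ r.body

def depEdge (P : Program α) (p q : α) : Prop := posEdge P p q ∨ negEdge P p q

/-- The dependency graph of `P` has no cycle involving a negative edge. -/
def Stratified (P : Program α) : Prop :=
  ¬ ∃ p q, negEdge P p q ∧ Relation.ReflTransGen (depEdge P) q p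

/-- `P` is in GDT form: it is stratified and all its choice rules have the form
`{p} ←` with `p` occurring in the head of no other rule. -/
def GDT (P : Program α) : Prop :=
  Stratified P ∧ ∀ r ∈ P, ∀ p, r.head = Head.choice p →
    r.body = ∅ ∧ ∀ r' ∈ P, r' ≠ r → ¬ headAtomIs r' p

/-- A clause: a set of literals. -/
abbrev Clause (α : Type u) := Set (Lit α)

/-- A CNF formula: a set of clauses. -/
abbrev CNF (α : Type u) := Set (Clause α)

def clauseSat (M : Set α) (c : Clause α) : Prop := ∃ l ∈ c, l.sat M

def CnfModel (φ : CNF α) (M : Set α) : Prop := ∀ c ∈ φ, clauseSat M c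

def CnfSat (φ : CNF α) : Prop := ∃ M, CnfModel φ M

def clauseAtoms (c : Clause α) : Set α := Lit.atomOf '' c

def cnfAtoms (φ : CNF α) : Set α := ⋃ c ∈ φ, clauseAtoms c

/-- `fixbf X Y = {{p} | p ∈ X} ∪ {{¬p} | p ∈ Y \ X}`. -/
def fixbf (X Y : Set α) : CNF α :=
  {c | (∃ p ∈ X, c = {Lit.pos p}) ∨ (∃ p ∈ Y \ X, c = {Lit.neg p})}

/-- Satisfiability of a QBF in prenex CNF, given by prefix and matrix. -/
def QBFSat : List (Quant × Set α) → CNF α → Prop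
  | [], φ => CnfSat φ
  | (Quant.ex, X) :: Q, φ => ∃ Y, Y ⊆ X ∧ QBFSat Q (φ ∪ fixbf Y X)
  | (Quant.fa, X) :: Q, φ => ∀ Y, Y ⊆ X → QBFSat Q (φ ∪ fixbf Y X)

def mapLit (g : α → β) : Lit α → Lit β
  | .pos a => .pos (g a)
  | .neg a => .neg (g a)

def mapHead (g : α → β) : Head α → Head β
  | .atom a => .atom (g a)
  | .choice a => .choice (g a)
  | .bot => .bot

def mapRule (g : α → β) (r : Rule α) : Rule β :=
  ⟨mapHead g r.head, mapLit g '' r.body⟩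

/-- Rename the atoms of a program along `g`. -/
def mapProg (g : α → β) (P : Program α) : Program β := mapRule g '' P

/-- Add the literals in `L` to the body of every rule of `P`. -/
def addBody (L : Set (Lit α)) (P : Program α) : Program α :=
  {r | ∃ r' ∈ P, r = ⟨r'.head, r'.body ∪ L⟩}

def replBotHead (p : α) : Rule α → Rule α
  | ⟨Head.bot, B⟩ => ⟨Head.atom p, B⟩
  | r => r

/-- Replace `⊥` in the head of every integrity constraint of `P` by the atom `p`. -/
def botTo (p : α) (P : Program α) : Program α := replBotHead p '' P

def choiceRules (P : Program α) : Program α := {r ∈ P | ∃ p, r.head = Head.choice p}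

def normalRules (P : Program α) : Program α := {r ∈ P | ∃ p, r.head = Head.atom p}

def constraintRules (P : Program α) : Program α := {r ∈ P | r.head = Head.bot}

section Aux
open ASP

variable {α : Type*}

lemma redModel_union_fixcons {P : Program α} {Y Xs Z M : Set α}
    (hYZ : Y ⊆ Z) (hD : ∀ x ∈ Xs \ Y, x ∉ Z) :
    redModel (P ∪ fixcons Y Xs) Z M ↔ redModel P Z M := by
  constructor
  · intro h r hr hb
    exact h r (Or.inl hr) hb
  · intro h r hr hb
    rcases hr with hr | hr
    · exact h r hr hb
    · rcases hr with ⟨x, hx, rfl⟩ | ⟨x, hx, rfl⟩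
      · have := hb (Lit.neg x) rfl
        exact absurd (hYZ hx) this.1
      · have := hb (Lit.pos x) rfl
        exact absurd this.1 (hD x hx)

lemma stable_union_fixcons {P : Program α} {Y Xs : Set α} (hYX : Y ⊆ Xs) (Z : Set α) :
    StableModel (P ∪ fixcons Y Xs) Z ↔ StableModel P Z ∧ Z ∩ Xs = Y := by
  constructor
  · rintro ⟨hmod, hmin⟩
    -- first derive Z ∩ Xs = Y from the constraints
    have hYZ : Y ⊆ Z := by
      intro x hx
      by_contra hxZ
      exact hmod ⟨Head.bot, {Lit.neg x}⟩ (Or.inr (Or.inl ⟨x, hx, rfl⟩))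
        (by rintro l rfl; exact ⟨hxZ, hxZ⟩)
    have hD : ∀ x ∈ Xs \ Y, x ∉ Z := by
      intro x hx hxZ
      exact hmod ⟨Head.bot, {Lit.pos x}⟩ (Or.inr (Or.inr ⟨x, hx, rfl⟩))
        (by rintro l rfl; exact ⟨hxZ, hxZ⟩)
    have hZXY : Z ∩ Xs = Y := by
      apply Set.eq_of_subset_of_subset
      · rintro x ⟨hxZ, hxX⟩
        by_contra hxY
        exact hD x ⟨hxX, hxY⟩ hxZ
      · exact fun x hx => ⟨hYZ hx, hYX hx⟩
    refine ⟨⟨(redModel_union_fixcons hYZ hD).mp hmod, ?_⟩, hZXY⟩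
    intro M hM hMmod
    exact hmin M hM ((redModel_union_fixcons hYZ hD).mpr hMmod)
  · rintro ⟨⟨hmod, hmin⟩, hZXY⟩
    have hYZ : Y ⊆ Z := by
      intro x hx; rw [← hZXY] at hx; exact hx.1
    have hD : ∀ x ∈ Xs \ Y, x ∉ Z := by
      rintro x ⟨hxX, hxY⟩ hxZ
      exact hxY (hZXY ▸ ⟨hxZ, hxX⟩)
    refine ⟨(redModel_union_fixcons hYZ hD).mpr hmod, ?_⟩
    intro M hM hMmod
    exact hmin M hM ((redModel_union_fixcons hYZ hD).mp hMmod)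

lemma cnfmodel_union_fixbf {φ : CNF α} {Y Xs : Set α} (hYX : Y ⊆ Xs) (M : Set α) :
    CnfModel (φ ∪ fixbf Y Xs) M ↔ CnfModel φ M ∧ M ∩ Xs = Y := by
  constructor
  · intro h
    refine ⟨fun c hc => h c (Or.inl hc), ?_⟩
    apply Set.eq_of_subset_of_subset
    · rintro x ⟨hxM, hxX⟩
      by_contra hxY
      obtain ⟨l, hl, hsat⟩ := h {Lit.neg x} (Or.inr (Or.inr ⟨x, ⟨hxX, hxY⟩, rfl⟩))
      rw [hl] at hsat
      exact hsat hxM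
    · intro x hx
      obtain ⟨l, hl, hsat⟩ := h {Lit.pos x} (Or.inr (Or.inl ⟨x, hx, rfl⟩))
      rw [hl] at hsat
      exact ⟨hsat, hYX hx⟩
  · rintro ⟨hmod, hMXY⟩
    intro c hc
    rcases hc with hc | hc
    · exact hmod c hc
    · rcases hc with ⟨x, hx, rfl⟩ | ⟨x, hx, rfl⟩
      · exact ⟨Lit.pos x, rfl, (show x ∈ M ∩ Xs from hMXY.symm ▸ hx).1⟩
      · exact ⟨Lit.neg x, rfl, fun hxM => hx.2 (hMXY ▸ ⟨hxM, hx.1⟩)⟩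

end Aux

end ASP
open ASP in
/-- Theorem 1 of the paper: if `SM(P) = {M ∩ 𝒜 | M is a model of φ}`, for `P` a
logic program over `𝒜` and `φ` a CNF formula over `𝒜 ∪ ℬ`, then for every prefix
`𝒬` whose sets belong to `𝒜`, the QLP `𝒬P` is satisfiable iff the QBF `𝒬φ` is. -/
theorem qlp_sat_iff_qbf_sat {α : Type*} (𝒜 ℬ : Set α) (hAB : Disjoint 𝒜 ℬ)
    (P : Program α) (φ : CNF α)
    (hP : progAtoms P ⊆ 𝒜)
    (hφ : cnfAtoms φ ⊆ 𝒜 ∪ ℬ)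
    (hSM : SM P = {X | ∃ M, CnfModel φ M ∧ X = M ∩ 𝒜})
    (Qs : List (Quant × Set α))
    (hQ : ∀ q ∈ Qs, q.2 ⊆ 𝒜)
    (hdisj : Qs.Pairwise fun q q' => Disjoint q.2 q'.2) :
    QLPSat Qs P ↔ QBFSat Qs φ := by
  clear hAB hP hφ hdisj
  induction Qs generalizing P φ with
  | nil =>
    simp only [QLPSat, QBFSat, Satisfiable, CnfSat]
    constructor
    · rintro ⟨X, hX⟩
      have hX' : X ∈ SM P := hX
      rw [hSM] at hX'
      obtain ⟨M, hM, _⟩ := hX'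
      exact ⟨M, hM⟩
    · rintro ⟨M, hM⟩
      have : M ∩ 𝒜 ∈ SM P := by rw [hSM]; exact ⟨M, hM, rfl⟩
      exact ⟨M ∩ 𝒜, this⟩
  | cons q Q ih =>
    have hXA : q.2 ⊆ 𝒜 := hQ q List.mem_cons_self
    have hQ' : ∀ q' ∈ Q, q'.2 ⊆ 𝒜 := fun q' hq' => hQ q' (List.mem_cons_of_mem _ hq')
    have hinter : ∀ M : Set α, (M ∩ 𝒜) ∩ q.2 = M ∩ q.2 := by
      intro M
      rw [Set.inter_assoc, Set.inter_eq_right.mpr hXA]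
    have key : ∀ Y ⊆ q.2, (QLPSat Q (P ∪ fixcons Y q.2) ↔ QBFSat Q (φ ∪ fixbf Y q.2)) := by
      intro Y hY
      apply ih
      · ext Z
        show StableModel (P ∪ fixcons Y q.2) Z ↔ _
        rw [stable_union_fixcons hY]
        simp only [Set.mem_setOf_eq]
        constructor
        · rintro ⟨hZ, hZXY⟩
          have hZ' : Z ∈ SM P := hZ
          rw [hSM] at hZ'
          obtain ⟨M, hM, rfl⟩ := hZ'
          refine ⟨M, (cnfmodel_union_fixbf hY M).mpr ⟨hM, ?_⟩, rfl⟩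
          rw [← hZXY, hinter]
        · rintro ⟨M, hM, rfl⟩
          rw [cnfmodel_union_fixbf hY] at hM
          have hZ : M ∩ 𝒜 ∈ SM P := by rw [hSM]; exact ⟨M, hM.1, rfl⟩
          exact ⟨hZ, by rw [hinter, hM.2]⟩
      · exact hQ'
    obtain ⟨q1, Xs⟩ := q
    cases q1 with
    | ex =>
      simp only [QLPSat, QBFSat]
      exact ⟨fun ⟨Y, hY, h⟩ => ⟨Y, hY, (key Y hY).mp h⟩,
             fun ⟨Y, hY, h⟩ => ⟨Y, hY, (key Y hY).mpr h⟩⟩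
    | fa =>
      simp only [QLPSat, QBFSat]
      exact ⟨fun h Y hY => (key Y hY).mp (h Y hY),
             fun h Y hY => (key Y hY).mpr (h Y hY)⟩
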